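/- Suppose a = 0 and b > 0. Then A(x) = 9b(b²x⁴ + 4bx² − 1) for all x, and A(x) ≤ 0 if and only if x² ≤ (√5 − 2)/b. Consequently, if in addition c = 0, then M(x,y) ≤ 0 for all (x,y) with |x| ≤ √((√5 − 2)/b). -/

import Mathlib

open Set

/-- `F(x) = x²/2 + a·x³/3 + b·x⁴/4`. -/
noncomputable def Fq (a b : ℝ) : ℝ → ℝ := fun x => x ^ 2 / 2 + a * x ^ 3 / 3 + b * x ^ 4 / 4

/-- `G(y) = y²/2 + c·y⁴/4`. -/
noncomputable def Gq (c : ℝ) : ℝ → ℝ := fun y => y ^ 2 / 2 + c * y ^ 4 / 4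

/-- The function `M(x,y)` built from `F` and `G`. -/
noncomputable def Mfun (F G : ℝ → ℝ) (x y : ℝ) : ℝ :=
  (6 * F x * (deriv (deriv F) x) ^ 2 - 3 * (deriv F x) ^ 2 * deriv (deriv F) x
      - 2 * F x * deriv F x * deriv (deriv (deriv F)) x) * G y * (deriv G y) ^ 2
    + F x * (deriv F x) ^ 2 * deriv (deriv F) x
      * ((deriv G y) ^ 2 - 2 * G y * deriv (deriv G) y)

/-- The function `M(x,y)` for the quartic Hamiltonian with parameters `a`, `b`, `c`. -/
noncomputable def Mq (a b c : ℝ) (x y : ℝ) : ℝ := Mfun (Fq a b) (Gq c) x y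

/-- The polynomial `A(x)`. -/
def Apoly (a b x : ℝ) : ℝ :=
  10 * a ^ 2 - 9 * b + a * (30 * b + 4 * a ^ 2) * x + b * (36 * b + 16 * a ^ 2) * x ^ 2
    + 24 * a * b ^ 2 * x ^ 3 + 9 * b ^ 3 * x ^ 4

/-- The polynomial `B(x)`. -/
def Bpoly (a b x : ℝ) : ℝ :=
  (6 + 4 * a * x + 3 * b * x ^ 2) * (1 + a * x + b * x ^ 2) ^ 2 * (1 + 2 * a * x + 3 * b * x ^ 2)

/-- The polynomial `P(y)`. -/
def Ppoly (c y : ℝ) : ℝ := (1 + c * y ^ 2) ^ 2 * (2 + c * y ^ 2)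

/-- The polynomial `Q(y)`. -/
def Qpoly (c y : ℝ) : ℝ := c * (3 + c * y ^ 2)


lemma dF1 (b : ℝ) : deriv (Fq 0 b) = fun x => x + b * x ^ 3 := by
  funext x
  have h : HasDerivAt (Fq 0 b) (x + b * x ^ 3) x := by
    have := (((hasDerivAt_pow 2 x).div_const 2).add
      (((hasDerivAt_pow 3 x).const_mul (0:ℝ)).div_const 3)).add
      (((hasDerivAt_pow 4 x).const_mul b).div_const 4)
    exact this.congr_deriv (by push_cast; ring)
  exact h.deriv

lemma dF2 (b : ℝ) : deriv (deriv (Fq 0 b)) = fun x => 1 + 3 * b * x ^ 2 := by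
  rw [dF1]
  funext x
  have h : HasDerivAt (fun x : ℝ => x + b * x ^ 3) (1 + 3 * b * x ^ 2) x := by
    have := (hasDerivAt_id x).add ((hasDerivAt_pow 3 x).const_mul b)
    exact this.congr_deriv (by push_cast; ring)
  exact h.deriv

lemma dF3 (b : ℝ) : deriv (deriv (deriv (Fq 0 b))) = fun x => 6 * b * x := by
  rw [dF2]
  funext x
  have h : HasDerivAt (fun x : ℝ => 1 + 3 * b * x ^ 2) (6 * b * x) x := by
    have := (hasDerivAt_const x (1:ℝ)).add ((hasDerivAt_pow 2 x).const_mul (3 * b))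
    exact this.congr_deriv (by push_cast; ring)
  exact h.deriv

lemma dG1 : deriv (Gq 0) = fun y => y := by
  funext y
  have h : HasDerivAt (Gq 0) y y := by
    have := ((hasDerivAt_pow 2 y).div_const 2).add
      (((hasDerivAt_pow 4 y).const_mul (0:ℝ)).div_const 4)
    exact this.congr_deriv (by push_cast; ring)
  exact h.deriv

lemma dG2 : deriv (deriv (Gq 0)) = fun _ => 1 := by
  rw [dG1]
  funext y
  exact (hasDerivAt_id y).deriv

lemma Mq_eq (b x y : ℝ) :
    Mq 0 b 0 x y = 3 / 4 * b * x ^ 4 * y ^ 4 * (b ^ 2 * x ^ 4 + 4 * b * x ^ 2 - 1) := by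
  unfold Mq Mfun
  rw [dF3, dF2, dF1, dG2, dG1]
  unfold Fq Gq
  ring

theorem stmt8 (b : ℝ) (hb : 0 < b) :
    (∀ x : ℝ, Apoly 0 b x = 9 * b * (b ^ 2 * x ^ 4 + 4 * b * x ^ 2 - 1)) ∧
    (∀ x : ℝ, Apoly 0 b x ≤ 0 ↔ x ^ 2 ≤ (Real.sqrt 5 - 2) / b) ∧
    (∀ x y : ℝ, |x| ≤ Real.sqrt ((Real.sqrt 5 - 2) / b) → Mq 0 b 0 x y ≤ 0) := by
  have hs0 : (0:ℝ) ≤ Real.sqrt 5 := Real.sqrt_nonneg 5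
  have hs : Real.sqrt 5 ^ 2 = 5 := Real.sq_sqrt (by norm_num)
  have hs2 : (2:ℝ) ≤ Real.sqrt 5 := by nlinarith
  have key : ∀ x : ℝ, (b ^ 2 * x ^ 4 + 4 * b * x ^ 2 - 1 ≤ 0 ↔ x ^ 2 ≤ (Real.sqrt 5 - 2) / b) := by
    intro x
    rw [le_div_iff₀ hb]
    constructor
    · intro h
      nlinarith [sq_nonneg (b * x ^ 2 + 2 + Real.sqrt 5), sq_nonneg x, hb.le]
    · intro h
      nlinarith [sq_nonneg x, mul_nonneg hb.le (sq_nonneg x)]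
  have hA : ∀ x : ℝ, Apoly 0 b x = 9 * b * (b ^ 2 * x ^ 4 + 4 * b * x ^ 2 - 1) := by
    intro x; unfold Apoly; ring
  refine ⟨hA, fun x => ?_, fun x y hx => ?_⟩
  · rw [hA x, ← key x]
    constructor
    · intro h
      nlinarith
    · intro h
      nlinarith
  · have hx2 : x ^ 2 ≤ (Real.sqrt 5 - 2) / b := by
      have h1 : |x| ^ 2 ≤ Real.sqrt ((Real.sqrt 5 - 2) / b) ^ 2 :=
        pow_le_pow_left₀ (abs_nonneg x) hx 2
      have h2 : (0:ℝ) ≤ (Real.sqrt 5 - 2) / b := div_nonneg (by linarith) hb.le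
      rw [Real.sq_sqrt h2, sq_abs] at h1
      exact h1
    have hC : b ^ 2 * x ^ 4 + 4 * b * x ^ 2 - 1 ≤ 0 := (key x).mpr hx2
    rw [Mq_eq]
    have h4 : (0:ℝ) ≤ 3 / 4 * b * x ^ 4 * y ^ 4 := by positivity
    exact mul_nonpos_of_nonneg_of_nonpos h4 hC
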